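/- Let {s_a, p_A} be a representation of the labeled space (E,L,𝔅̄) in a C*-algebra such that p_C ≠ 0 for every nonempty C ∈ 𝔅̄. Let α_1,…,α_n ∈ L*(E) be distinct labeled paths all of the same length l ≥ 1, and let A ∈ 𝔅̄ satisfy A ⊆ ∪_{i=1}^n r(A,α_i). Then p_A is an infinite projection provided one of the following holds: (i) the union over i of the sets of initial segments of α_i is a proper subset of L(AE^{≤l}); (ii) r(A,α_i')_sk ≠ ∅ for some i and some initial segment α_i' of α_i; (iii) A is a proper subset of ∪_{i=1}^n r(A,α_i). -/

import Mathlib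

/-! # Common framework for labeled graph C*-algebras

Directed graphs, finite paths, labeled spaces `(E, L, 𝔅̄)` where `𝔅̄` is the
smallest accommodating set closed under relative complements (and containing
the sink parts of its members), loops and generalized loops, representations
of labeled spaces in C*-algebras, gauge actions, infinite projections,
AF algebras, and closed two-sided ideals. -/

noncomputable section

/-- A directed graph with vertex set `V` and edge set `E`. -/
structure DirGraph (V : Type*) (E : Type*) where
  src : E → V
  rng : E → V

variable {V E 𝒜 : Type*}

/-- A (finite) path of positive length in a directed graph: a nonempty list of
composable edges. -/
structure GPath (G : DirGraph V E) where
  edges : List E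
  ne : edges ≠ []
  chain : edges.Chain' fun e f => G.rng e = G.src f

namespace GPath

variable {G : DirGraph V E}

/-- The source vertex of a path. -/
def source (p : GPath G) : V := G.src (p.edges.head p.ne)

/-- The range vertex of a path. -/
def range (p : GPath G) : V := G.rng (p.edges.getLast p.ne)

/-- The length of a path. -/
def length (p : GPath G) : ℕ := p.edges.length

/-- The label word of a path under a labeling `L`. -/
def label (L : E → 𝒜) (p : GPath G) : List 𝒜 := p.edges.map L

end GPath

/-- The set of sinks of a graph (vertices emitting no edge). -/
def DirGraph.sinks (G : DirGraph V E) : Set V := {v | ∀ e, G.src e ≠ v}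

/-- `w ∈ L*(E)`: `w` is the label of some path of positive length. -/
def IsLabelWord (G : DirGraph V E) (L : E → 𝒜) (w : List 𝒜) : Prop :=
  ∃ p : GPath G, p.label L = w

/-- The range `r(w)` of a labeled path `w`. -/
def rngW (G : DirGraph V E) (L : E → 𝒜) (w : List 𝒜) : Set V :=
  {v | ∃ p : GPath G, p.label L = w ∧ p.range = v}

/-- The relative range `r(A, w)` of a labeled path `w` with respect to `A`. -/
def relRng (G : DirGraph V E) (L : E → 𝒜) (A : Set V) (w : List 𝒜) : Set V :=
  {v | ∃ p : GPath G, p.label L = w ∧ p.source ∈ A ∧ p.range = v}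

/-- `L(A E^n)`: labels of paths of length exactly `n` with source in `A`. -/
def labelsFromLen (G : DirGraph V E) (L : E → 𝒜) (A : Set V) (n : ℕ) : Set (List 𝒜) :=
  {w | ∃ p : GPath G, p.source ∈ A ∧ p.length = n ∧ p.label L = w}

/-- `L(A E^{≤n})`: labels of paths of length between `1` and `n` with source in `A`. -/
def labelsFromLe (G : DirGraph V E) (L : E → 𝒜) (A : Set V) (n : ℕ) : Set (List 𝒜) :=
  {w | ∃ p : GPath G, p.source ∈ A ∧ p.length ≤ n ∧ p.label L = w}

/-- `L(A E^{≥n})`: labels of paths of length at least `n` (and at least `1`)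
with source in `A`. -/
def labelsFromGe (G : DirGraph V E) (L : E → 𝒜) (A : Set V) (n : ℕ) : Set (List 𝒜) :=
  {w | ∃ p : GPath G, p.source ∈ A ∧ n ≤ p.length ∧ p.label L = w}

/-- `L(E^n A)`: labels of paths of length exactly `n` with range in `A`. -/
def labelsToLen (G : DirGraph V E) (L : E → 𝒜) (n : ℕ) (A : Set V) : Set (List 𝒜) :=
  {w | ∃ p : GPath G, p.range ∈ A ∧ p.length = n ∧ p.label L = w}

/-- `L(E^{≤l} v)`: labels of paths of length between `1` and `l` with range `v`. -/
def labelsToLe (G : DirGraph V E) (L : E → 𝒜) (l : ℕ) (v : V) : Set (List 𝒜) :=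
  {w | ∃ p : GPath G, p.range = v ∧ p.length ≤ l ∧ p.label L = w}

/-- `𝔅̄`: the smallest accommodating set for `(E, L)` (containing the ranges
`r(α)` for `α ∈ L*(E)` and closed under relative ranges, finite intersections
and finite unions) that is moreover closed under relative complements and
contains `A_sk = A ∩ sinks` for every `A` belonging to it. -/
inductive Bbar (G : DirGraph V E) (L : E → 𝒜) : Set V → Prop
  | base (w : List 𝒜) (hw : IsLabelWord G L w) : Bbar G L (rngW G L w)
  | rel (A : Set V) (w : List 𝒜) (hA : Bbar G L A) (hw : IsLabelWord G L w) :
      Bbar G L (relRng G L A w)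
  | inter (A B : Set V) (hA : Bbar G L A) (hB : Bbar G L B) : Bbar G L (A ∩ B)
  | union (A B : Set V) (hA : Bbar G L A) (hB : Bbar G L B) : Bbar G L (A ∪ B)
  | diff (A B : Set V) (hA : Bbar G L A) (hB : Bbar G L B) : Bbar G L (A \ B)
  | sk (A : Set V) (hA : Bbar G L A) : Bbar G L (A ∩ G.sinks)

/-- The standing assumptions on a labeled space `(E, L, 𝔅̄)`: weakly
left-resolving, set-finite, receiver set-finite, and no sink is a source. -/
structure StandingAssumptions (G : DirGraph V E) (L : E → 𝒜) : Prop where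
  wlr : ∀ A B : Set V, Bbar G L A → Bbar G L B → ∀ w : List 𝒜, IsLabelWord G L w →
    relRng G L A w ∩ relRng G L B w = relRng G L (A ∩ B) w
  setFinite : ∀ A : Set V, Bbar G L A → ∀ n : ℕ, 1 ≤ n → (labelsFromLen G L A n).Finite
  receiverSetFinite : ∀ A : Set V, Bbar G L A → ∀ n : ℕ, 1 ≤ n → (labelsToLen G L n A).Finite
  sinkNotSource : ∀ v ∈ G.sinks, ∃ e, G.rng e = v

/-- The `n`-fold concatenation `w^n` of a word `w`. -/
def wordPow (w : List 𝒜) (n : ℕ) : List 𝒜 := (List.replicate n w).flatten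

/-- A labeled path is repeatable if all its powers `w^n`, `n ≥ 1`, are again
labeled paths. -/
def Repeatable (G : DirGraph V E) (L : E → 𝒜) (w : List 𝒜) : Prop :=
  ∀ n : ℕ, 1 ≤ n → IsLabelWord G L (wordPow w n)

/-- The generalized vertex `[v]_l`: all non-source vertices receiving exactly
the same labeled paths of length at most `l` as `v` does. -/
def gvtx (G : DirGraph V E) (L : E → 𝒜) (l : ℕ) (v : V) : Set V :=
  {u | (∃ e, G.rng e = u) ∧ labelsToLe G L l u = labelsToLe G L l v}

/-- A generalized loop at `A`: a labeled path `α ∈ L(A E^{≥1} A)`. -/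
def IsGenLoop (G : DirGraph V E) (L : E → 𝒜) (A : Set V) (α : List 𝒜) : Prop :=
  ∃ p : GPath G, p.label L = α ∧ p.source ∈ A ∧ p.range ∈ A

/-- A loop at `A`: a generalized loop `α` at `A` such that `A ⊆ r(A, α)`. -/
def IsLoop (G : DirGraph V E) (L : E → 𝒜) (A : Set V) (α : List 𝒜) : Prop :=
  IsGenLoop G L A α ∧ A ⊆ relRng G L A α

/-- The nonempty initial segments (initial paths) of a word `α`. -/
def initialSegs (α : List 𝒜) : Set (List 𝒜) := {w | w ≠ [] ∧ w <+: α}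

/-- A loop `α` at `A` has an exit if (i) the initial segments of `α` form a
proper subset of `L(A E^{≤|α|})`, or (ii) `r(A, α_{[1,i]})` contains a sink for
some `1 ≤ i ≤ |α|`, or (iii) `A` is a proper subset of `r(A, α)`. -/
def HasExitLoop (G : DirGraph V E) (L : E → 𝒜) (A : Set V) (α : List 𝒜) : Prop :=
  initialSegs α ⊂ labelsFromLe G L A α.length ∨
  (∃ k : ℕ, 1 ≤ k ∧ k ≤ α.length ∧ (relRng G L A (α.take k) ∩ G.sinks).Nonempty) ∨
  A ⊂ relRng G L A α

/-- `A_0 E^{≤K} A_1 ⋯ E^{≤K} A_m ≠ ∅`: existence of `m` consecutively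
composable paths, each of length between `1` and `K`, the `j`-th going from
`As j` to `As (j+1)`. -/
def ChainExists (G : DirGraph V E) (As : ℕ → Set V) (K m : ℕ) : Prop :=
  ∃ xs : Fin m → GPath G,
    (∀ j : Fin m, (xs j).length ≤ K ∧ (xs j).source ∈ As j.val ∧
      (xs j).range ∈ As (j.val + 1)) ∧
    ∀ (j : ℕ) (h : j + 1 < m),
      (xs ⟨j, Nat.lt_of_succ_lt h⟩).range = (xs ⟨j + 1, h⟩).source

/-- Same as `ChainExists` but with all paths of length exactly `K`
(i.e. `A_0 E^K A_1 ⋯ E^K A_m ≠ ∅`). -/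
def ChainExistsExact (G : DirGraph V E) (As : ℕ → Set V) (K m : ℕ) : Prop :=
  ∃ xs : Fin m → GPath G,
    (∀ j : Fin m, (xs j).length = K ∧ (xs j).source ∈ As j.val ∧
      (xs j).range ∈ As (j.val + 1)) ∧
    ∀ (j : ℕ) (h : j + 1 < m),
      (xs ⟨j, Nat.lt_of_succ_lt h⟩).range = (xs ⟨j + 1, h⟩).source

/-- Condition (a): for every finite family `A_1, …, A_N` in `𝔅̄` and every
`K ≥ 1` there is `m₀ ≥ 1` such that
`A_{i_1} E^{≤K} A_{i_2} ⋯ E^{≤K} A_{i_n} = ∅` (`n` sets, `n - 1` path factors)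
for all `n > m₀` and all choices of indices. -/
def CondA (G : DirGraph V E) (L : E → 𝒜) : Prop :=
  ∀ (N : ℕ) (As : Fin N → Set V), (∀ i, Bbar G L (As i)) → ∀ K : ℕ, 1 ≤ K →
    ∃ m0 : ℕ, 1 ≤ m0 ∧ ∀ n : ℕ, m0 < n → ∀ ι : ℕ → Fin N,
      ¬ ChainExists G (fun j => As (ι j)) K (n - 1)

/-- A word is agreeable (for level `l`) if it is of the form `β^k β'` with
`β, β' ∈ L(E^{≤l})` and `β'` a nonempty initial segment of `β`. -/
def AgreeableW (G : DirGraph V E) (L : E → 𝒜) (l : ℕ) (α : List 𝒜) : Prop :=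
  ∃ (k : ℕ) (β β' : List 𝒜), IsLabelWord G L β ∧ IsLabelWord G L β' ∧
    β.length ≤ l ∧ β' ≠ [] ∧ β' <+: β ∧ α = wordPow β k ++ β'

/-- A representation of the labeled space `(E, L, 𝔅̄)` in a (C*-)algebra `B`:
projections `p A`, `A ∈ 𝔅̄`, and partial isometries `s a`, `a ∈ 𝒜`, satisfying
the defining relations of a labeled graph C*-algebra. -/
structure LRep (G : DirGraph V E) (L : E → 𝒜) (B : Type*)
    [NonUnitalRing B] [StarRing B] where
  p : Set V → B
  s : 𝒜 → B
  p_empty : p ∅ = 0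
  p_sa : ∀ A : Set V, Bbar G L A → star (p A) = p A
  p_mul : ∀ A A' : Set V, Bbar G L A → Bbar G L A' → p A * p A' = p (A ∩ A')
  p_union : ∀ A A' : Set V, Bbar G L A → Bbar G L A' →
    p (A ∪ A') = p A + p A' - p (A ∩ A')
  s_pi : ∀ a : 𝒜, s a * star (s a) * s a = s a
  p_s : ∀ (A : Set V) (a : 𝒜), Bbar G L A → p A * s a = s a * p (relRng G L A [a])
  s_s : ∀ a : 𝒜, star (s a) * s a = p (rngW G L [a])
  s_orth : ∀ a b : 𝒜, a ≠ b → star (s a) * s b = 0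
  ck : ∀ A : Set V, Bbar G L A →
    p A = (∑ᶠ a ∈ {a : 𝒜 | ∃ e, G.src e ∈ A ∧ L e = a},
      s a * p (relRng G L A [a]) * star (s a)) + p (A ∩ G.sinks)

/-- `s_α` for a word `α`: the product of the partial isometries of its letters
(junk value `0` on the empty word, which is never used). -/
def sWord {B : Type*} [NonUnitalRing B] (s : 𝒜 → B) : List 𝒜 → B
  | [] => 0
  | [a] => s a
  | a :: b :: w => s a * sWord s (b :: w)

/-- The range of a word in `L^#(E)` (`none` is the empty word, with range all
of `E^0`). -/
def owordRng (G : DirGraph V E) (L : E → 𝒜) : Option (List 𝒜) → Set V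
  | none => Set.univ
  | some w => rngW G L w

/-- The relative range of a word in `L^#(E)` with respect to `A` (`none` is
the empty word, with `r(A, ε) = A`). -/
def relRngE (G : DirGraph V E) (L : E → 𝒜) (A : Set V) : Option (List 𝒜) → Set V
  | none => A
  | some w => relRng G L A w

/-- The element `s_α p_A s_β*` of a representation, where `α`, `β` are words in
`L^#(E)` (`none` being the empty word `ε` with `s_ε` the identity). -/
def LRep.elt {B : Type*} [NonUnitalRing B] [StarRing B] {G : DirGraph V E} {L : E → 𝒜}
    (rep : LRep G L B) : Option (List 𝒜) → Set V → Option (List 𝒜) → B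
  | none, A, none => rep.p A
  | some α, A, none => sWord rep.s α * rep.p A
  | none, A, some β => rep.p A * star (sWord rep.s β)
  | some α, A, some β => sWord rep.s α * rep.p A * star (sWord rep.s β)

/-- A projection `q` is infinite if there is a partial isometry `u` with
`u* u = q`, `u u* ≤ q` and `u u* ≠ q`. -/
def IsInfiniteProjection (B : Type*) [NonUnitalRing B] [StarRing B] [PartialOrder B]
    (q : B) : Prop :=
  star q = q ∧ q * q = q ∧ ∃ u : B, star u * u = q ∧ u * star u ≤ q ∧ u * star u ≠ q

/-- A C*-algebra is AF if every finite subset can be approximated within any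
`ε > 0` from a finite-dimensional *-subalgebra. -/
def IsAFAlgebra (B : Type*) [NonUnitalNormedRing B] [StarRing B] [NormedSpace ℂ B] : Prop :=
  ∀ (F : Finset B) (ε : ℝ), 0 < ε →
    ∃ D : NonUnitalStarSubalgebra ℂ B, FiniteDimensional ℂ D ∧
      ∀ x ∈ F, ∃ y ∈ (D : Set B), ‖x - y‖ < ε

/-- A gauge action for a representation: a strongly continuous action of the
circle group by *-automorphisms fixing the projections and scaling the
generating partial isometries. -/
structure GaugeAction {B : Type*} [NonUnitalCStarAlgebra B]
    (G : DirGraph V E) (L : E → 𝒜) (rep : LRep G L B) where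
  γ : Circle → B ≃⋆ₐ[ℂ] B
  γ_mul : ∀ z w : Circle, γ (z * w) = (γ w).trans (γ z)
  γ_continuous : ∀ x : B, Continuous fun z => γ z x
  γ_s : ∀ (z : Circle) (a : 𝒜), γ z (rep.s a) = (z : ℂ) • rep.s a
  γ_p : ∀ (z : Circle) (A : Set V), Bbar G L A → γ z (rep.p A) = rep.p A

/-- The representation generates `B` as a C*-algebra. -/
def GeneratesAlg {B : Type*} [NonUnitalCStarAlgebra B]
    (G : DirGraph V E) (L : E → 𝒜) (rep : LRep G L B) : Prop :=
  closure (NonUnitalStarAlgebra.adjoin ℂ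
    ({x : B | ∃ a : 𝒜, x = rep.s a} ∪ {x : B | ∃ A : Set V, Bbar G L A ∧ x = rep.p A}) : Set B)
    = Set.univ

/-- A closed two-sided ideal of a C*-algebra (as a set). -/
def IsClosedTwoSidedIdealSet (B : Type*) [NonUnitalNormedRing B] [NormedSpace ℂ B]
    (I : Set B) : Prop :=
  IsClosed I ∧ (0 : B) ∈ I ∧ (∀ x ∈ I, ∀ y ∈ I, x + y ∈ I) ∧
    (∀ (c : ℂ), ∀ x ∈ I, c • x ∈ I) ∧ ∀ x ∈ I, ∀ y : B, x * y ∈ I ∧ y * x ∈ I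

/-- The closed two-sided ideal generated by an element. -/
def closedIdealGen (B : Type*) [NonUnitalNormedRing B] [NormedSpace ℂ B] (q : B) : Set B :=
  ⋂₀ {I : Set B | IsClosedTwoSidedIdealSet B I ∧ q ∈ I}


/-! ## Auxiliary infrastructure for the proof -/

section AuxInfra

variable {V E 𝒜 : Type*} {G : DirGraph V E} {L : E → 𝒜}

namespace GPath

/-- Concatenation of composable paths. -/
def gappend (p q : GPath G) (h : p.range = q.source) : GPath G where
  edges := p.edges ++ q.edges
  ne := by simp [p.ne]
  chain := by
    show List.IsChain _ (p.edges ++ q.edges)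
    rw [List.isChain_append]
    refine ⟨p.chain, q.chain, ?_⟩
    intro x hx y hy
    rw [List.getLast?_eq_getLast p.ne, Option.mem_def, Option.some_inj] at hx
    rw [List.head?_eq_head q.ne, Option.mem_def, Option.some_inj] at hy
    rw [← hx, ← hy]
    exact h

lemma gappend_source (p q : GPath G) (h : p.range = q.source) :
    (p.gappend q h).source = p.source := by
  simp only [GPath.source, gappend, List.head_append]
  rw [dif_neg (by simpa using p.ne)]

lemma gappend_range (p q : GPath G) (h : p.range = q.source) :
    (p.gappend q h).range = q.range := by
  simp only [GPath.range, gappend, List.getLast_append]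
  rw [dif_neg (by simpa using q.ne)]

lemma gappend_label (p q : GPath G) (h : p.range = q.source) :
    (p.gappend q h).label L = p.label L ++ q.label L := by
  simp [GPath.label, gappend]

/-- Initial segment of a path. -/
def gtake (p : GPath G) (k : ℕ) (hk : k ≠ 0) : GPath G where
  edges := p.edges.take k
  ne := by simp [List.take_eq_nil_iff, hk, p.ne]
  chain := p.chain.prefix (List.take_prefix _ _)

/-- Final segment of a path. -/
def gdrop (p : GPath G) (k : ℕ) (hk : k < p.edges.length) : GPath G where
  edges := p.edges.drop k
  ne := by simp [List.drop_eq_nil_iff]; omega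
  chain := p.chain.suffix (List.drop_suffix _ _)

lemma gtake_source (p : GPath G) (k : ℕ) (hk : k ≠ 0) :
    (p.gtake k hk).source = p.source := by
  simp only [GPath.source, gtake]
  rw [List.head_eq_getElem, List.head_eq_getElem p.ne, List.getElem_take]

lemma gdrop_range (p : GPath G) (k : ℕ) (hk : k < p.edges.length) :
    (p.gdrop k hk).range = p.range := by
  simp only [GPath.range, gdrop]
  rw [List.getLast_eq_getElem, List.getLast_eq_getElem p.ne]
  congr 1
  simp only [List.getElem_drop]
  congr 1
  simp only [List.length_drop]
  omega

lemma gtake_range_eq_gdrop_source (p : GPath G) (k : ℕ) (hk : k ≠ 0)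
    (hk' : k < p.edges.length) :
    (p.gtake k hk).range = (p.gdrop k hk').source := by
  simp only [GPath.range, GPath.source, gtake, gdrop]
  rw [List.getLast_eq_getElem, List.head_eq_getElem]
  have h1 : (p.edges.take k).length - 1 < (p.edges.take k).length := by
    simp [List.length_take]; omega
  simp only [List.getElem_take, List.getElem_drop]
  have hlt : (p.edges.take k).length - 1 + 1 < p.edges.length := by
    simp [List.length_take]; omega
  have := List.isChain_iff_getElem.mp p.chain ((p.edges.take k).length - 1) (by omega)
  convert this using 3
  simp [List.length_take]
  omega

lemma gtake_label (p : GPath G) (k : ℕ) (hk : k ≠ 0) :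
    (p.gtake k hk).label L = (p.label L).take k := by
  simp [GPath.label, gtake, List.map_take]

lemma gdrop_label (p : GPath G) (k : ℕ) (hk : k < p.edges.length) :
    (p.gdrop k hk).label L = (p.label L).drop k := by
  simp [GPath.label, gdrop, List.map_drop]

lemma label_length (p : GPath G) : (p.label L).length = p.edges.length := by
  simp [GPath.label]

lemma label_ne_nil (p : GPath G) : p.label L ≠ [] := by
  simp [GPath.label, p.ne]

end GPath

lemma relRng_append (C : Set V) {α β : List 𝒜} (hα : α ≠ []) (hβ : β ≠ []) :
    relRng G L C (α ++ β) = relRng G L (relRng G L C α) β := by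
  ext v
  constructor
  · rintro ⟨p, hlab, hsrc, hrng⟩
    have hkne : α.length ≠ 0 := by simpa using hα
    have hklt : α.length < p.edges.length := by
      have := p.label_length (L := L)
      rw [hlab] at this
      simp only [List.length_append] at this
      have : p.edges.length = α.length + β.length := this.symm
      have hb : β.length ≠ 0 := by simpa using hβ
      omega
    refine ⟨p.gdrop α.length hklt, ?_, ?_, ?_⟩
    · rw [p.gdrop_label, hlab]; simp
    · refine ⟨p.gtake α.length hkne, ?_, ?_, ?_⟩
      · rw [p.gtake_label, hlab]; simp
      · rw [p.gtake_source]; exact hsrc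
      · exact p.gtake_range_eq_gdrop_source _ hkne hklt
    · rw [p.gdrop_range]; exact hrng
  · rintro ⟨q, hqlab, ⟨p, hplab, hpsrc, hprng⟩, hqrng⟩
    refine ⟨p.gappend q hprng, ?_, ?_, ?_⟩
    · rw [GPath.gappend_label, hplab, hqlab]
    · rw [GPath.gappend_source]; exact hpsrc
    · rw [GPath.gappend_range]; exact hqrng

lemma rngW_eq_relRng_univ (w : List 𝒜) : rngW G L w = relRng G L Set.univ w := by
  ext v
  simp [rngW, relRng]

lemma rngW_append {α β : List 𝒜} (hα : α ≠ []) (hβ : β ≠ []) :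
    rngW G L (α ++ β) = relRng G L (rngW G L α) β := by
  rw [rngW_eq_relRng_univ, relRng_append _ hα hβ, ← rngW_eq_relRng_univ]

lemma relRng_subset_rngW (C : Set V) (w : List 𝒜) :
    relRng G L C w ⊆ rngW G L w := by
  rintro v ⟨p, h1, _, h3⟩
  exact ⟨p, h1, h3⟩

lemma isLabelWord_singleton (hL : Function.Surjective L) (a : 𝒜) :
    IsLabelWord G L [a] := by
  obtain ⟨e, he⟩ := hL a
  exact ⟨⟨[e], by simp, List.isChain_singleton e⟩, by simp [GPath.label, he]⟩

lemma bbar_empty {A : Set V} (hA : Bbar G L A) : Bbar G L (∅ : Set V) := by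
  have := Bbar.diff A A hA hA
  simpa using this

lemma bbar_relRng (hL : Function.Surjective L) {C : Set V} (hC : Bbar G L C)
    {w : List 𝒜} (hw : w ≠ []) : Bbar G L (relRng G L C w) := by
  induction w generalizing C with
  | nil => exact absurd rfl hw
  | cons a t ih =>
    rcases eq_or_ne t ([] : List 𝒜) with rfl | ht
    · exact Bbar.rel C [a] hC (isLabelWord_singleton hL a)
    · have : (a :: t) = [a] ++ t := rfl
      rw [this, relRng_append C (by simp) ht]
      exact ih (Bbar.rel C [a] hC (isLabelWord_singleton hL a)) ht

lemma bbar_rngW (hL : Function.Surjective L) {w : List 𝒜} (hw : w ≠ []) :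
    Bbar G L (rngW G L w) := by
  cases w with
  | nil => exact absurd rfl hw
  | cons a t =>
    rcases eq_or_ne t ([] : List 𝒜) with rfl | ht
    · exact Bbar.base [a] (isLabelWord_singleton hL a)
    · have : (a :: t) = [a] ++ t := rfl
      rw [this, rngW_append (by simp) ht]
      exact bbar_relRng hL (Bbar.base [a] (isLabelWord_singleton hL a)) ht

lemma relRng_sinks_empty {D : Set V} (hD : D ⊆ G.sinks) {w : List 𝒜} (hw : w ≠ []) :
    relRng G L D w = ∅ := by
  ext v
  simp only [Set.mem_empty_iff_false, iff_false]
  rintro ⟨p, hlab, hsrc, hrng⟩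
  exact hD hsrc (p.edges.head p.ne) rfl

lemma bbar_finset_biUnion {ι : Type*} [DecidableEq ι] {A : Set V} (hA : Bbar G L A)
    (t : Finset ι) (f : ι → Set V) (hf : ∀ i ∈ t, Bbar G L (f i)) :
    Bbar G L (⋃ i ∈ t, f i) := by
  classical
  induction t using Finset.induction_on with
  | empty => simpa using bbar_empty hA
  | @insert a s ha ih =>
    rw [Finset.set_biUnion_insert]
    exact Bbar.union _ _ (hf a (Finset.mem_insert_self a s))
      (ih fun i hi => hf i (Finset.mem_insert_of_mem hi))

section RepLemmas

variable {B : Type*} [NonUnitalRing B] [StarRing B] (rep : LRep G L B)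

lemma sWord_cons (a : 𝒜) {w : List 𝒜} (hw : w ≠ []) :
    sWord rep.s (a :: w) = rep.s a * sWord rep.s w := by
  cases w with
  | nil => exact absurd rfl hw
  | cons b t => rfl

lemma sWord_append {α β : List 𝒜} (hα : α ≠ []) (hβ : β ≠ []) :
    sWord rep.s (α ++ β) = sWord rep.s α * sWord rep.s β := by
  induction α with
  | nil => exact absurd rfl hα
  | cons a t ih =>
    rcases eq_or_ne t ([] : List 𝒜) with rfl | ht
    · simp only [List.singleton_append]
      rw [sWord_cons rep a hβ]; rfl
    · rw [List.cons_append, sWord_cons rep a (by simp [ht]), ih ht, ← mul_assoc,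
        ← sWord_cons rep a ht]

lemma p_sWord (hL : Function.Surjective L) {C : Set V} (hC : Bbar G L C)
    {w : List 𝒜} (hw : w ≠ []) :
    rep.p C * sWord rep.s w = sWord rep.s w * rep.p (relRng G L C w) := by
  induction w generalizing C with
  | nil => exact absurd rfl hw
  | cons a t ih =>
    rcases eq_or_ne t ([] : List 𝒜) with rfl | ht
    · exact rep.p_s C a hC
    · have h1 : Bbar G L (relRng G L C [a]) := Bbar.rel C [a] hC (isLabelWord_singleton hL a)
      have hset : relRng G L (relRng G L C [a]) t = relRng G L C (a :: t) := by
        rw [show (a :: t) = [a] ++ t from rfl, relRng_append C (by simp) ht]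
      rw [sWord_cons rep a ht, ← mul_assoc, rep.p_s C a hC, mul_assoc, ih h1 ht, hset,
        ← mul_assoc, ← sWord_cons rep a ht]

lemma star_sWord_self (hL : Function.Surjective L) {w : List 𝒜} (hw : w ≠ []) :
    star (sWord rep.s w) * sWord rep.s w = rep.p (rngW G L w) := by
  induction w with
  | nil => exact absurd rfl hw
  | cons a t ih =>
    rcases eq_or_ne t ([] : List 𝒜) with rfl | ht
    · exact rep.s_s a
    · have hra : Bbar G L (rngW G L [a]) := Bbar.base [a] (isLabelWord_singleton hL a)
      have hset : relRng G L (rngW G L [a]) t = rngW G L (a :: t) := by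
        rw [show (a :: t) = [a] ++ t from rfl, rngW_append (by simp) ht]
      rw [sWord_cons rep a ht, star_mul, mul_assoc, ← mul_assoc (star (rep.s a)),
        rep.s_s a, p_sWord rep hL hra ht, ← mul_assoc, ih ht,
        rep.p_mul _ _ (bbar_rngW hL ht) (bbar_relRng hL hra ht),
        Set.inter_eq_self_of_subset_right (relRng_subset_rngW _ t), hset]

lemma star_sWord_ne (hL : Function.Surjective L) {v w : List 𝒜}
    (hlen : v.length = w.length) (hne : v ≠ w) (hv : v ≠ []) :
    star (sWord rep.s v) * sWord rep.s w = 0 := by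
  induction v generalizing w with
  | nil => exact absurd rfl hv
  | cons a t ih =>
    cases w with
    | nil => simp at hlen
    | cons b u =>
      have hlen' : t.length = u.length := by simpa using hlen
      rcases eq_or_ne t ([] : List 𝒜) with rfl | ht
      · have hu : u = [] := by simpa using hlen'.symm
        subst hu
        have hab : a ≠ b := fun h => hne (by rw [h])
        exact rep.s_orth a b hab
      · have hu : u ≠ [] := by
          intro h; subst h; exact ht (List.length_eq_zero_iff.mp (by simpa using hlen'))
        rcases eq_or_ne a b with rfl | hab
        · have htu : t ≠ u := fun h => hne (by rw [h])
          have hra : Bbar G L (rngW G L [a]) := Bbar.base [a] (isLabelWord_singleton hL a)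
          rw [sWord_cons rep a ht, sWord_cons rep a hu, star_mul, mul_assoc,
            ← mul_assoc (star (rep.s a)), rep.s_s a, p_sWord rep hL hra hu,
            ← mul_assoc, ih hlen' htu ht, zero_mul]
        · rw [sWord_cons rep a ht, sWord_cons rep b hu, star_mul, mul_assoc,
            ← mul_assoc (star (rep.s a)), rep.s_orth a b hab, zero_mul, mul_zero]

lemma conj_p (hL : Function.Surjective L) {C : Set V} (hC : Bbar G L C)
    {w : List 𝒜} (hw : w ≠ []) :
    star (sWord rep.s w) * rep.p C * sWord rep.s w = rep.p (relRng G L C w) := by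
  rw [mul_assoc, p_sWord rep hL hC hw, ← mul_assoc, star_sWord_self rep hL hw,
    rep.p_mul _ _ (bbar_rngW hL hw) (bbar_relRng hL hC hw),
    Set.inter_eq_self_of_subset_right (relRng_subset_rngW C w)]

lemma star_sWord_not_prefix (hL : Function.Surjective L) {β w : List 𝒜} (hβ : β ≠ [])
    (hle : β.length ≤ w.length) (h : w.take β.length ≠ β) :
    star (sWord rep.s β) * sWord rep.s w = 0 := by
  rcases eq_or_lt_of_le hle with heq | hlt
  · rw [List.take_of_length_le heq.ge] at h
    exact star_sWord_ne rep hL heq (fun hh => h hh.symm) hβ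
  · have hd : w.drop β.length ≠ [] := by
      rw [Ne, List.drop_eq_nil_iff]; omega
    have htk : w.take β.length ≠ [] := by
      rw [Ne, List.take_eq_nil_iff]
      push_neg
      constructor
      · simpa using hβ
      · intro hw0; rw [hw0] at hlt; simp at hlt
    have hlen2 : β.length = (w.take β.length).length := by
      rw [List.length_take]; omega
    conv_lhs => rw [← List.take_append_drop β.length w]
    rw [sWord_append rep htk hd, ← mul_assoc,
      star_sWord_ne rep hL hlen2 (fun hh => h (hh.symm)) hβ, zero_mul]

lemma star_sWord_prefix (hL : Function.Surjective L) {β w : List 𝒜} (hβ : β ≠ [])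
    (hlt : β.length < w.length) (h : w.take β.length = β) :
    star (sWord rep.s β) * sWord rep.s w
      = sWord rep.s (w.drop β.length)
          * rep.p (relRng G L (rngW G L β) (w.drop β.length)) := by
  have hd : w.drop β.length ≠ [] := by
    rw [Ne, List.drop_eq_nil_iff]; omega
  conv_lhs => rw [← List.take_append_drop β.length w]
  rw [h, sWord_append rep hβ hd, ← mul_assoc, star_sWord_self rep hL hβ,
    p_sWord rep hL (bbar_rngW hL hβ) hd]

lemma p_biUnion_disjoint {ι : Type*} [DecidableEq ι] {A : Set V} (hA : Bbar G L A)
    (t : Finset ι) (f : ι → Set V) (hf : ∀ i ∈ t, Bbar G L (f i))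
    (hd : ∀ i ∈ t, ∀ j ∈ t, i ≠ j → f i ∩ f j = ∅) :
    rep.p (⋃ i ∈ t, f i) = ∑ i ∈ t, rep.p (f i) := by
  classical
  induction t using Finset.induction_on with
  | empty => simpa using rep.p_empty
  | @insert a s ha ih =>
    rw [Finset.set_biUnion_insert, Finset.sum_insert ha]
    have hfa := hf a (Finset.mem_insert_self a s)
    have hfs : ∀ i ∈ s, Bbar G L (f i) := fun i hi => hf i (Finset.mem_insert_of_mem hi)
    have hU : Bbar G L (⋃ i ∈ s, f i) := bbar_finset_biUnion hA s f hfs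
    rw [rep.p_union _ _ hfa hU]
    have hint : f a ∩ ⋃ i ∈ s, f i = ∅ := by
      rw [Set.eq_empty_iff_forall_notMem]
      rintro x ⟨hx1, hx2⟩
      simp only [Set.mem_iUnion] at hx2
      obtain ⟨i, hi, hx2⟩ := hx2
      have hne : a ≠ i := fun hh => ha (hh ▸ hi)
      have := hd a (Finset.mem_insert_self a s) i (Finset.mem_insert_of_mem hi) hne
      rw [Set.eq_empty_iff_forall_notMem] at this
      exact this x ⟨hx1, hx2⟩
    rw [hint, rep.p_empty, sub_zero,
      ih hfs (fun i hi j hj hij => hd i (Finset.mem_insert_of_mem hi) j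
        (Finset.mem_insert_of_mem hj) hij)]

end RepLemmas

end AuxInfra


/-- Remark 3.3, generalized Proposition 3.5. Let
`{s_a, p_A}` be a representation of `(E, L, 𝔅̄)` in a C*-algebra with
`p_C ≠ 0` for every nonempty `C ∈ 𝔅̄`. If `α_1, …, α_n ∈ L*(E)` are distinct
labeled paths of the same length `l ≥ 1` with `A ⊆ ⋃ᵢ r(A, α_i)` for some
`A ∈ 𝔅̄`, then `p_A` is infinite provided (i) the union of the initial
segments of the `α_i` is a proper subset of `L(A E^{≤l})`, or (ii) some
`r(A, α_i')` contains a sink for some initial segment `α_i'` of some `α_i`, or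
(iii) `A` is a proper subset of `⋃ᵢ r(A, α_i)`. -/
theorem cover_infinite_projection {V E 𝒜 B : Type*}
    [Countable V] [Countable E] [Countable 𝒜]
    [NonUnitalCStarAlgebra B] [PartialOrder B] [StarOrderedRing B]
    (G : DirGraph V E) (L : E → 𝒜) (hL : Function.Surjective L)
    (sa : StandingAssumptions G L)
    (rep : LRep G L B)
    (hp : ∀ C : Set V, Bbar G L C → C.Nonempty → rep.p C ≠ 0)
    (n l : ℕ) (hn : 1 ≤ n) (hl : 1 ≤ l)
    (αs : Fin n → List 𝒜) (hdist : Function.Injective αs)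
    (hlab : ∀ i, IsLabelWord G L (αs i)) (hlen : ∀ i, (αs i).length = l)
    (A : Set V) (hA : Bbar G L A) (hcover : A ⊆ ⋃ i, relRng G L A (αs i))
    (hcase :
      (⋃ i, initialSegs (αs i)) ⊂ labelsFromLe G L A l ∨
      (∃ (i : Fin n) (k : ℕ), 1 ≤ k ∧ k ≤ l ∧
        (relRng G L A ((αs i).take k) ∩ G.sinks).Nonempty) ∨
      A ⊂ ⋃ i, relRng G L A (αs i)) :
    IsInfiniteProjection B (rep.p A) := by
  classical
  have hαne : ∀ i, αs i ≠ [] := by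
    intro i h
    have h2 := hlen i
    rw [h] at h2
    simp at h2
    omega
  have hαlen := hlen
  -- the partition of A subordinate to the cover
  set Bs : Fin n → Set V := fun i =>
    (A ∩ relRng G L A (αs i)) \ ⋃ j ∈ Finset.Iio i, relRng G L A (αs j) with hBs
  have hBbar : ∀ i, Bbar G L (Bs i) := by
    intro i
    rw [hBs]
    exact Bbar.diff _ _ (Bbar.inter _ _ hA (bbar_relRng hL hA (hαne i)))
      (bbar_finset_biUnion hA _ _ (fun j _ => bbar_relRng hL hA (hαne j)))
  have hBsubA : ∀ i, Bs i ⊆ A := by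
    intro i x hx
    rw [hBs] at hx
    exact hx.1.1
  have hBsubR : ∀ i, Bs i ⊆ relRng G L A (αs i) := by
    intro i x hx
    rw [hBs] at hx
    exact hx.1.2
  have hBsubRng : ∀ i, Bs i ⊆ rngW G L (αs i) :=
    fun i => (hBsubR i).trans (relRng_subset_rngW _ _)
  have hBdisj : ∀ i j, i ≠ j → Bs i ∩ Bs j = ∅ := by
    intro i j hij
    rw [Set.eq_empty_iff_forall_notMem]
    rintro x ⟨hxi, hxj⟩
    have hxi' := hxi; have hxj' := hxj
    rw [hBs] at hxi' hxj'
    rcases lt_or_gt_of_ne hij with h | h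
    · exact hxj'.2 (Set.mem_iUnion₂.mpr ⟨i, Finset.mem_Iio.mpr h, hxi'.1.2⟩)
    · exact hxi'.2 (Set.mem_iUnion₂.mpr ⟨j, Finset.mem_Iio.mpr h, hxj'.1.2⟩)
  have hBunion : ⋃ i ∈ (Finset.univ : Finset (Fin n)), Bs i = A := by
    apply Set.eq_of_subset_of_subset
    · intro x hx
      simp only [Set.mem_iUnion] at hx
      obtain ⟨i, _, hx⟩ := hx
      exact hBsubA i hx
    · intro x hx
      have hex : ∃ i : Fin n, x ∈ relRng G L A (αs i) := by
        have := hcover hx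
        simpa [Set.mem_iUnion] using this
      set S := Finset.univ.filter (fun i => x ∈ relRng G L A (αs i)) with hS
      have hSne : S.Nonempty := by
        obtain ⟨i, hi⟩ := hex
        exact ⟨i, by simp [hS, hi]⟩
      set i0 := S.min' hSne with hi0def
      have hi0 : x ∈ relRng G L A (αs i0) := by
        have h := Finset.mem_filter.mp (S.min'_mem hSne)
        exact h.2
      refine Set.mem_iUnion₂.mpr ⟨i0, Finset.mem_univ i0, ?_⟩
      rw [hBs]
      refine ⟨⟨hx, hi0⟩, ?_⟩
      intro hmem
      rw [Set.mem_iUnion₂] at hmem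
      obtain ⟨j, hj, hxj⟩ := hmem
      have hle0 : i0 ≤ j := S.min'_le j (by simp [hS, hxj])
      exact absurd (Finset.mem_Iio.mp hj) (not_lt.mpr hle0)
  -- the partial isometry
  set v : B := ∑ i : Fin n, sWord rep.s (αs i) * rep.p (Bs i) with hv
  have hsav : star v = ∑ i : Fin n, rep.p (Bs i) * star (sWord rep.s (αs i)) := by
    rw [hv, star_sum]
    apply Finset.sum_congr rfl
    intro i _
    rw [star_mul, rep.p_sa _ (hBbar i)]
  have hoffd : ∀ i j : Fin n, i ≠ j →
      star (sWord rep.s (αs i)) * sWord rep.s (αs j) = 0 := fun i j hij =>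
    star_sWord_ne rep hL (by rw [hαlen i, hαlen j]) (fun h => hij (hdist h)) (hαne i)
  have hdiag : ∀ i : Fin n,
      star (sWord rep.s (αs i)) * sWord rep.s (αs i) = rep.p (rngW G L (αs i)) :=
    fun i => star_sWord_self rep hL (hαne i)
  have hvv : star v * v = rep.p A := by
    rw [hsav, hv, Finset.sum_mul_sum]
    have hterms : ∀ i ∈ (Finset.univ : Finset (Fin n)),
        (∑ j : Fin n, (rep.p (Bs i) * star (sWord rep.s (αs i)))
          * (sWord rep.s (αs j) * rep.p (Bs j))) = rep.p (Bs i) := by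
      intro i _
      rw [Finset.sum_eq_single_of_mem i (Finset.mem_univ i)]
      · rw [← mul_assoc, mul_assoc (rep.p (Bs i)), hdiag i,
          rep.p_mul _ _ (hBbar i) (bbar_rngW hL (hαne i)),
          Set.inter_eq_self_of_subset_left (hBsubRng i),
          rep.p_mul _ _ (hBbar i) (hBbar i), Set.inter_self]
      · intro j _ hji
        rw [← mul_assoc, mul_assoc (rep.p (Bs i)), hoffd i j (Ne.symm hji),
          mul_zero, zero_mul]
    rw [Finset.sum_congr rfl hterms,
      ← p_biUnion_disjoint rep hA Finset.univ Bs (fun i _ => hBbar i)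
        (fun i _ j _ hij => hBdisj i j hij), hBunion]
  have hvpA : v * rep.p A = v := by
    rw [hv, Finset.sum_mul]
    apply Finset.sum_congr rfl
    intro i _
    rw [mul_assoc, rep.p_mul _ _ (hBbar i) hA,
      Set.inter_eq_self_of_subset_left (hBsubA i)]
  have hpAv : rep.p A * v = v := by
    rw [hv, Finset.mul_sum]
    apply Finset.sum_congr rfl
    intro i _
    rw [← mul_assoc, p_sWord rep hL hA (hαne i), mul_assoc,
      rep.p_mul _ _ (bbar_relRng hL hA (hαne i)) (hBbar i),
      Set.inter_eq_self_of_subset_right (hBsubR i)]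
  have hq : v * star v = ∑ i : Fin n,
      sWord rep.s (αs i) * rep.p (Bs i) * star (sWord rep.s (αs i)) := by
    rw [hsav, hv, Finset.sum_mul_sum]
    apply Finset.sum_congr rfl
    intro i _
    rw [Finset.sum_eq_single_of_mem i (Finset.mem_univ i)]
    · rw [← mul_assoc, mul_assoc (sWord rep.s (αs i)),
        rep.p_mul _ _ (hBbar i) (hBbar i), Set.inter_self]
    · intro j _ hji
      rw [← mul_assoc, mul_assoc (sWord rep.s (αs i)),
        rep.p_mul _ _ (hBbar i) (hBbar j)]
      rw [hBdisj i j (Ne.symm hji), rep.p_empty, mul_zero, zero_mul]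
  have hpA_sa : star (rep.p A) = rep.p A := rep.p_sa A hA
  have hpA_idem : rep.p A * rep.p A = rep.p A := by
    rw [rep.p_mul _ _ hA hA, Set.inter_self]
  have hq_sa : star (v * star v) = v * star v := by rw [star_mul, star_star]
  have hAq : rep.p A * (v * star v) = v * star v := by rw [← mul_assoc, hpAv]
  have hqA : (v * star v) * rep.p A = v * star v := by
    have h := congrArg star hAq
    rwa [star_mul, hq_sa, hpA_sa] at h
  have hpAsv : rep.p A * star v = star v := by
    have h := congrArg star hvpA
    rwa [star_mul, hpA_sa] at h
  have hqq : (v * star v) * (v * star v) = v * star v := by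
    rw [mul_assoc, ← mul_assoc (star v), hvv, ← mul_assoc, mul_assoc v, hpAsv]
  have hr_idem : (rep.p A - v * star v) * (rep.p A - v * star v)
      = rep.p A - v * star v := by
    rw [sub_mul, mul_sub, mul_sub, hpA_idem, hAq, hqA, hqq]
    abel
  have hr_sa : star (rep.p A - v * star v) = rep.p A - v * star v := by
    rw [star_sub, hpA_sa, hq_sa]
  have hle : v * star v ≤ rep.p A := by
    rw [← sub_nonneg]
    have h := star_mul_self_nonneg (rep.p A - v * star v)
    rwa [hr_sa, hr_idem] at h
  -- the conjugated form of v v*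
  have hconjq : ∀ (β : List 𝒜), β ≠ [] →
      star (sWord rep.s β) * (v * star v) * sWord rep.s β
      = ∑ j : Fin n, (star (sWord rep.s β) * sWord rep.s (αs j)) * rep.p (Bs j)
          * star (star (sWord rep.s β) * sWord rep.s (αs j)) := by
    intro β hβ
    rw [hq, Finset.mul_sum, Finset.sum_mul]
    apply Finset.sum_congr rfl
    intro j _
    simp only [star_mul, star_star, mul_assoc]
  have hne : v * star v ≠ rep.p A := by
    intro hqeq
    -- sink-in-A contradiction
    have hsinkA : (A ∩ G.sinks).Nonempty → False := by
      intro hS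
      have hSb : Bbar G L (A ∩ G.sinks) := Bbar.sk A hA
      have h1 : rep.p (A ∩ G.sinks) * (v * star v) = 0 := by
        rw [hq, Finset.mul_sum]
        apply Finset.sum_eq_zero
        intro j _
        rw [← mul_assoc, ← mul_assoc, p_sWord rep hL hSb (hαne j),
          relRng_sinks_empty Set.inter_subset_right (hαne j), rep.p_empty,
          mul_zero, zero_mul, zero_mul]
      rw [hqeq, rep.p_mul _ _ hSb hA,
        Set.inter_eq_self_of_subset_left Set.inter_subset_left] at h1
      exact hp _ hSb hS h1
    -- contradiction from a point of r(A, α_i) outside A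
    have hpoint : ∀ i : Fin n, (relRng G L A (αs i) \ A).Nonempty → False := by
      intro i hD
      have hDb : Bbar G L (relRng G L A (αs i) \ A) :=
        Bbar.diff _ _ (bbar_relRng hL hA (hαne i)) hA
      have z1 : star (sWord rep.s (αs i)) * rep.p A * sWord rep.s (αs i)
          = rep.p (relRng G L A (αs i)) := conj_p rep hL hA (hαne i)
      have z2 : star (sWord rep.s (αs i)) * (v * star v) * sWord rep.s (αs i)
          = rep.p (Bs i) := by
        rw [hconjq (αs i) (hαne i)]
        rw [Finset.sum_eq_single_of_mem i (Finset.mem_univ i)]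
        · rw [hdiag i, rep.p_sa _ (bbar_rngW hL (hαne i)),
            rep.p_mul _ _ (bbar_rngW hL (hαne i)) (hBbar i),
            Set.inter_eq_self_of_subset_right (hBsubRng i),
            rep.p_mul _ _ (hBbar i) (bbar_rngW hL (hαne i)),
            Set.inter_eq_self_of_subset_left (hBsubRng i)]
        · intro j _ hji
          rw [hoffd i j (Ne.symm hji), zero_mul, zero_mul]
      rw [hqeq, z1] at z2
      have z3 : rep.p (relRng G L A (αs i) \ A)
          * rep.p (relRng G L A (αs i))
          * rep.p (relRng G L A (αs i) \ A)
          = rep.p (relRng G L A (αs i) \ A) := by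
        rw [rep.p_mul _ _ hDb (bbar_relRng hL hA (hαne i)),
          Set.inter_eq_self_of_subset_left Set.diff_subset,
          rep.p_mul _ _ hDb hDb, Set.inter_self]
      have hDBempty : (relRng G L A (αs i) \ A) ∩ Bs i = ∅ := by
        rw [Set.eq_empty_iff_forall_notMem]
        rintro x ⟨hx1, hx2⟩
        exact hx1.2 (hBsubA i hx2)
      have z4 : rep.p (relRng G L A (αs i) \ A) * rep.p (Bs i)
          * rep.p (relRng G L A (αs i) \ A) = 0 := by
        rw [rep.p_mul _ _ hDb (hBbar i), hDBempty, rep.p_empty, zero_mul]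
      have : rep.p (relRng G L A (αs i) \ A) = 0 := by
        rw [← z3, z2, z4]
      exact hp _ hDb hD this
    -- case (i)
    have hcase1 : ∀ β ∈ labelsFromLe G L A l,
        β ∉ (⋃ i, initialSegs (αs i)) → False := by
      intro β hβmem hβnot
      obtain ⟨pth, hpsrc, hplen, hplab⟩ := hβmem
      have hβne : β ≠ [] := by rw [← hplab]; exact pth.label_ne_nil
      have hβlen : β.length ≤ l := by
        rw [← hplab, GPath.label_length]
        exact hplen
      have htake : ∀ j : Fin n, (αs j).take β.length ≠ β := by
        intro j h
        apply hβnot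
        refine Set.mem_iUnion.mpr ⟨j, hβne, ?_⟩
        rw [← h]
        exact List.take_prefix _ _
      have z1 : star (sWord rep.s β) * rep.p A * sWord rep.s β
          = rep.p (relRng G L A β) := conj_p rep hL hA hβne
      have z2 : star (sWord rep.s β) * (v * star v) * sWord rep.s β = 0 := by
        rw [hconjq β hβne]
        apply Finset.sum_eq_zero
        intro j _
        rw [star_sWord_not_prefix rep hL hβne (by rw [hαlen j]; exact hβlen)
          (htake j), zero_mul, zero_mul]
      rw [hqeq, z1] at z2
      have hne2 : (relRng G L A β).Nonempty := ⟨pth.range, pth, hplab, hpsrc, rfl⟩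
      exact hp _ (bbar_relRng hL hA hβne) hne2 z2
    -- case (ii) with k < l
    have hcase2 : ∀ (i : Fin n) (k : ℕ), 1 ≤ k → k < l →
        (relRng G L A ((αs i).take k) ∩ G.sinks).Nonempty → False := by
      intro i k hk1 hkl hDne
      set β := (αs i).take k with hβdef
      have hβne : β ≠ [] := by
        rw [hβdef, Ne, List.take_eq_nil_iff]
        push_neg
        exact ⟨by omega, hαne i⟩
      have hβlen : β.length = k := by
        rw [hβdef, List.length_take, hαlen i]
        omega
      have hDb : Bbar G L (relRng G L A β ∩ G.sinks) :=
        Bbar.sk _ (bbar_relRng hL hA hβne)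
      have hDsub : relRng G L A β ∩ G.sinks ⊆ G.sinks := Set.inter_subset_right
      have hDsubR : relRng G L A β ∩ G.sinks ⊆ relRng G L A β := Set.inter_subset_left
      have z1 : star (sWord rep.s β) * rep.p A * sWord rep.s β
          = rep.p (relRng G L A β) := conj_p rep hL hA hβne
      have z2 : ∀ j : Fin n, rep.p (relRng G L A β ∩ G.sinks)
          * ((star (sWord rep.s β) * sWord rep.s (αs j)) * rep.p (Bs j)
            * star (star (sWord rep.s β) * sWord rep.s (αs j))) = 0 := by
        intro j
        by_cases hpre : (αs j).take β.length = β
        · have hdne : (αs j).drop β.length ≠ [] := by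
            rw [Ne, List.drop_eq_nil_iff, hαlen j, hβlen]
            omega
          rw [star_sWord_prefix rep hL hβne (by rw [hαlen j, hβlen]; omega) hpre]
          simp only [← mul_assoc]
          rw [p_sWord rep hL hDb hdne, relRng_sinks_empty hDsub hdne, rep.p_empty,
            mul_zero, zero_mul, zero_mul, zero_mul]
        · rw [star_sWord_not_prefix rep hL hβne (by rw [hαlen j, hβlen]; omega) hpre,
            zero_mul, zero_mul, mul_zero]
      have z3 : rep.p (relRng G L A β ∩ G.sinks)
          * (star (sWord rep.s β) * (v * star v) * sWord rep.s β) = 0 := by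
        rw [hconjq β hβne, Finset.mul_sum]
        exact Finset.sum_eq_zero (fun j _ => z2 j)
      rw [hqeq, z1, rep.p_mul _ _ hDb (bbar_relRng hL hA hβne),
        Set.inter_eq_self_of_subset_left hDsubR] at z3
      exact hp _ hDb hDne z3
    -- dispatch the three cases
    rcases hcase with h1 | h2 | h3
    · obtain ⟨β, hβ1, hβ2⟩ := Set.exists_of_ssubset h1
      exact hcase1 β hβ1 hβ2
    · obtain ⟨i, k, hk1, hkl, hDne⟩ := h2
      rcases lt_or_eq_of_le hkl with hlt | heq
      · exact hcase2 i k hk1 hlt hDne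
      · rw [heq] at hDne
        have htk : (αs i).take l = αs i := List.take_of_length_le (by rw [hαlen i])
        rw [htk] at hDne
        by_cases hDA : ((relRng G L A (αs i) ∩ G.sinks) \ A).Nonempty
        · obtain ⟨x, hx⟩ := hDA
          exact hpoint i ⟨x, hx.1.1, hx.2⟩
        · rw [Set.not_nonempty_iff_eq_empty, Set.diff_eq_empty] at hDA
          obtain ⟨x, hx⟩ := hDne
          exact hsinkA ⟨x, hDA hx, hx.2⟩
    · obtain ⟨x, hx1, hx2⟩ := Set.exists_of_ssubset h3
      rw [Set.mem_iUnion] at hx1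
      obtain ⟨i, hxi⟩ := hx1
      exact hpoint i ⟨x, hxi, hx2⟩
  exact ⟨hpA_sa, hpA_idem, v, hvv, hle, hne⟩


end
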